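/- Let δ > 0, a, c ∈ ℝ, and let A, C, K₂, K₀ : I → ℝ be differentiable on a real interval I satisfying A' + 2A² = -a, C' + δ²A = -c, K₂' + 4AK₂ + δ²K₂² = 0, and K₀' + 4A + (3δ²/2)K₂ = 0 on I. Define Φ(t, x) = A(t)x² + C(t) and m(t, x) = x·exp(-(K₂(t)/2)x² + K₀(t)). Then for every t ∈ I and every x ∈ ℝ, ∂_t Φ + (1/2)(∂_x Φ)² + (δ²/2)∂²_{xx} Φ = -(a x² + c) and ∂_t m + ∂_x(m · ∂_x Φ) = (δ²/2)∂²_{xx} m. -/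

import Mathlib

lemma poly_hasDerivAt (b c0 y : ℝ) :
    HasDerivAt (fun z : ℝ => b * z ^ 2 + c0) (2 * b * y) y := by
  have := ((hasDerivAt_pow 2 y).const_mul b).add_const c0
  convert this using 1
  · rfl
  · rfl
  · norm_num
    ring

lemma E_hasDerivAt (p q y : ℝ) :
    HasDerivAt (fun z : ℝ => Real.exp (p * z ^ 2 + q))
      (2 * p * y * Real.exp (p * y ^ 2 + q)) y := by
  have := (poly_hasDerivAt p q y).exp
  convert this using 1
  ring

lemma m_hasDerivAt (p q y : ℝ) :
    HasDerivAt (fun z : ℝ => z * Real.exp (p * z ^ 2 + q))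
      ((1 + 2 * p * y ^ 2) * Real.exp (p * y ^ 2 + q)) y := by
  have := (hasDerivAt_id y).mul (E_hasDerivAt p q y)
  simp only [id_eq] at this
  convert this using 1
  · rfl
  · rfl
  · rfl
  · ring

lemma m_deriv (p q : ℝ) :
    deriv (fun z : ℝ => z * Real.exp (p * z ^ 2 + q))
      = fun y => (1 + 2 * p * y ^ 2) * Real.exp (p * y ^ 2 + q) :=
  funext fun y => (m_hasDerivAt p q y).deriv

lemma m2_hasDerivAt (p q x : ℝ) :
    HasDerivAt (fun y : ℝ => (1 + 2 * p * y ^ 2) * Real.exp (p * y ^ 2 + q))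
      ((6 * p * x + 4 * p ^ 2 * x ^ 3) * Real.exp (p * x ^ 2 + q)) x := by
  have h1 : HasDerivAt (fun y : ℝ => 1 + 2 * p * y ^ 2) (2 * (2 * p) * x) x := by
    simpa [add_comm] using poly_hasDerivAt (2 * p) 1 x
  have := h1.mul (E_hasDerivAt p q x)
  convert this using 1
  · rfl
  · rfl
  · rfl
  · ring

/-- If `A, C, K₂, K₀` are differentiable on a real interval `I` and satisfy
`A' + 2A² = -a`, `C' + δ²A = -c`, `K₂' + 4AK₂ + δ²K₂² = 0`, `K₀' + 4A + (3δ²/2)K₂ = 0`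
on `I`, then the semi-axis ansatz `Φ(t,x) = A(t)x² + C(t)`,
`m(t,x) = x·exp(-(K₂(t)/2)x² + K₀(t))` solves both the Hamilton–Jacobi–Bellman equation
`∂ₜΦ + (1/2)(∂ₓΦ)² + (δ²/2)∂²ₓₓΦ = -(ax² + c)` and the Kolmogorov–Fokker–Planck
equation `∂ₜm + ∂ₓ(m ∂ₓΦ) = (δ²/2)∂²ₓₓm` for all `t ∈ I` and all `x ∈ ℝ`. -/
theorem semiaxis_ansatz_solves_MFG_system
    (δ a c : ℝ) (hδ : 0 < δ) (I : Set ℝ) (hI : I.OrdConnected)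
    (A C K₂ K₀ : ℝ → ℝ)
    (hA : ∀ t ∈ I, HasDerivAt A (-a - 2 * (A t) ^ 2) t)
    (hC : ∀ t ∈ I, HasDerivAt C (-c - δ ^ 2 * A t) t)
    (hK₂ : ∀ t ∈ I,
      HasDerivAt K₂ (-(4 * A t * K₂ t) - δ ^ 2 * (K₂ t) ^ 2) t)
    (hK₀ : ∀ t ∈ I,
      HasDerivAt K₀ (-(4 * A t) - (3 * δ ^ 2 / 2) * K₂ t) t) :
    ∀ t ∈ I, ∀ x : ℝ,
      (deriv (fun s => A s * x ^ 2 + C s) t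
          + (1 / 2) * (deriv (fun y => A t * y ^ 2 + C t) x) ^ 2
          + (δ ^ 2 / 2) * deriv (deriv (fun y => A t * y ^ 2 + C t)) x
        = -(a * x ^ 2 + c)) ∧
      (deriv (fun s => x * Real.exp (-(K₂ s / 2) * x ^ 2 + K₀ s)) t
          + deriv (fun y => (y * Real.exp (-(K₂ t / 2) * y ^ 2 + K₀ t))
              * deriv (fun z => A t * z ^ 2 + C t) y) x
        = (δ ^ 2 / 2) *
            deriv (deriv (fun y => y * Real.exp (-(K₂ t / 2) * y ^ 2 + K₀ t))) x) := by
  intro t ht x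
  set p : ℝ := -(K₂ t / 2) with hp
  set q : ℝ := K₀ t with hq
  -- spatial derivative of Φ
  have hΦx : deriv (fun y : ℝ => A t * y ^ 2 + C t) = fun y => 2 * A t * y :=
    funext fun y => (poly_hasDerivAt (A t) (C t) y).deriv
  have hΦxx : deriv (deriv (fun y : ℝ => A t * y ^ 2 + C t)) x = 2 * A t := by
    rw [hΦx]
    simpa using ((hasDerivAt_id x).const_mul (2 * A t)).deriv
  -- time derivative of Φ
  have hΦt : deriv (fun s => A s * x ^ 2 + C s) t
      = (-a - 2 * (A t) ^ 2) * x ^ 2 + (-c - δ ^ 2 * A t) :=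
    (((hA t ht).mul_const (x ^ 2)).add (hC t ht)).deriv
  constructor
  · have hlin : deriv (fun y : ℝ => 2 * A t * y) x = 2 * A t := by
      simpa using ((hasDerivAt_id x).const_mul (2 * A t)).deriv
    rw [hΦt, hΦxx]
    simp only [hΦx]
    ring
  -- KFP part
  · have hmt : deriv (fun s => x * Real.exp (-(K₂ s / 2) * x ^ 2 + K₀ s)) t
        = x * ((-(( -(4 * A t * K₂ t) - δ ^ 2 * (K₂ t) ^ 2) / 2) * x ^ 2
              + (-(4 * A t) - (3 * δ ^ 2 / 2) * K₂ t))
            * Real.exp (-(K₂ t / 2) * x ^ 2 + K₀ t)) := by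
      have hin : HasDerivAt (fun s => -(K₂ s / 2) * x ^ 2 + K₀ s)
          (-(( -(4 * A t * K₂ t) - δ ^ 2 * (K₂ t) ^ 2) / 2) * x ^ 2
            + (-(4 * A t) - (3 * δ ^ 2 / 2) * K₂ t)) t :=
        ((((hK₂ t ht).div_const 2).neg).mul_const (x ^ 2)).add (hK₀ t ht)
      have := (hin.exp.const_mul x).deriv
      rw [this]
      ring
    have hmx : deriv (fun y => (y * Real.exp (-(K₂ t / 2) * y ^ 2 + K₀ t))
          * deriv (fun z => A t * z ^ 2 + C t) y) x
        = ((1 + 2 * p * x ^ 2) * Real.exp (p * x ^ 2 + q)) * (2 * A t * x)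
            + (x * Real.exp (p * x ^ 2 + q)) * (2 * A t) := by
      have heq : (fun y => (y * Real.exp (-(K₂ t / 2) * y ^ 2 + K₀ t))
            * deriv (fun z => A t * z ^ 2 + C t) y)
          = fun y => (y * Real.exp (p * y ^ 2 + q)) * (2 * A t * y) := by
        ext y; rw [hΦx]
      rw [heq]
      simpa [Pi.mul_def] using ((m_hasDerivAt p q x).mul
        ((hasDerivAt_id x).const_mul (2 * A t))).deriv
    have hmxx : deriv (deriv (fun y => y * Real.exp (-(K₂ t / 2) * y ^ 2 + K₀ t))) x
        = (6 * p * x + 4 * p ^ 2 * x ^ 3) * Real.exp (p * x ^ 2 + q) := by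
      have : (fun y => y * Real.exp (-(K₂ t / 2) * y ^ 2 + K₀ t))
          = fun y => y * Real.exp (p * y ^ 2 + q) := rfl
      rw [this, m_deriv]
      exact (m2_hasDerivAt p q x).deriv
    rw [hmt, hmx, hmxx, hp, hq]
    ring
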